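/- Let P^a, J^a, Q^a ∈ ℝ³ and A ∈ ℝ, and let Ψ^{ab} = Ψ_P^{ab} + Ψ_J^{ab} + Ψ_A^{ab} + Ψ_Q^{ab} on ℝ³ \ {0} (with the tensors as in the context). Then Ψ^{ab} is symmetric, trace-free (δ_{ab} Ψ^{ab} = 0), and divergence-free with respect to the Euclidean metric: Σ_{a=1}^{3} ∂_a Ψ^{ab}(x) = 0 for all x ∈ ℝ³ with x ≠ 0 and each b = 1, 2, 3. -/

import Mathlib

noncomputable section

/-- ℝ³ with the Euclidean norm. -/
abbrev E3 := EuclideanSpace ℝ (Fin 3)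

/-- The `i`-th partial derivative of a function on ℝ³. -/
def pd (i : Fin 3) (f : E3 → ℝ) : E3 → ℝ :=
  fun x => fderiv ℝ f x (EuclideanSpace.single i 1)

/-- The Kronecker delta on `Fin 3`. -/
def kron (a b : Fin 3) : ℝ := if a = b then 1 else 0

/-- The alternating (Levi-Civita) symbol on `Fin 3`. -/
def levi (i j k : Fin 3) : ℝ :=
  if (i, j, k) = (0, 1, 2) ∨ (i, j, k) = (1, 2, 0) ∨ (i, j, k) = (2, 0, 1) then 1
  else if (i, j, k) = (0, 2, 1) ∨ (i, j, k) = (2, 1, 0) ∨ (i, j, k) = (1, 0, 2) then -1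
  else 0

/-- The radial unit normal `nⁱ = xⁱ/‖x‖` (junk value at the origin). -/
def nv (x : E3) (i : Fin 3) : ℝ := x i / ‖x‖

/-- `Ψ_P^{ab} = (3/(2r⁴))(−Pᵃnᵇ − Pᵇnᵃ − (δᵃᵇ − 5nᵃnᵇ) P·n)`. -/
def PsiP (P : Fin 3 → ℝ) (x : E3) (a b : Fin 3) : ℝ :=
  3 / (2 * ‖x‖ ^ 4) *
    (-(P a) * nv x b - P b * nv x a -
      (kron a b - 5 * nv x a * nv x b) * ∑ c, P c * nv x c)

/-- `Ψ_J^{ab} = (3/r³)(nᵃ εᵇᶜᵈ J_c n_d + nᵇ εᵃᶜᵈ J_c n_d)`. -/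
def PsiJ (J : Fin 3 → ℝ) (x : E3) (a b : Fin 3) : ℝ :=
  3 / ‖x‖ ^ 3 *
    ((∑ c, ∑ d, nv x a * levi b c d * J c * nv x d) +
      (∑ c, ∑ d, nv x b * levi a c d * J c * nv x d))

/-- `Ψ_A^{ab} = (A/r³)(3nᵃnᵇ − δᵃᵇ)`. -/
def PsiA (A : ℝ) (x : E3) (a b : Fin 3) : ℝ :=
  A / ‖x‖ ^ 3 * (3 * nv x a * nv x b - kron a b)

/-- `Ψ_Q^{ab} = (3/(2r²))(Qᵃnᵇ + Qᵇnᵃ − (δᵃᵇ − nᵃnᵇ) Q·n)`. -/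
def PsiQ (Q : Fin 3 → ℝ) (x : E3) (a b : Fin 3) : ℝ :=
  3 / (2 * ‖x‖ ^ 2) *
    (Q a * nv x b + Q b * nv x a -
      (kron a b - nv x a * nv x b) * ∑ c, Q c * nv x c)

/-- `Ψ^{ab} = Ψ_P^{ab} + Ψ_J^{ab} + Ψ_A^{ab} + Ψ_Q^{ab}`. -/
def PsiTot (P J Q : Fin 3 → ℝ) (A : ℝ) (x : E3) (a b : Fin 3) : ℝ :=
  PsiP P x a b + PsiJ J x a b + PsiA A x a b + PsiQ Q x a b

/-! ### Auxiliary machinery -/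

/-- The square of the norm as an explicit polynomial. -/
def qf : E3 → ℝ := fun y => y 0 ^ 2 + y 1 ^ 2 + y 2 ^ 2

/-- A linear form with coefficients `w`. -/
def sl (w : Fin 3 → ℝ) : E3 → ℝ := fun y => w 0 * y 0 + w 1 * y 1 + w 2 * y 2

/-- Coefficients of the linear form `y ↦ ∑ c d, ε_{i c d} J_c y_d`. -/
def ljc (J : Fin 3 → ℝ) (i d : Fin 3) : ℝ := ∑ c, levi i c d * J c

/-- The polynomial numerator: `Ψ^{ab} = pp^{ab} · ‖x‖ / (qf x)⁴`. -/
def pp (P J Q : Fin 3 → ℝ) (A : ℝ) (a b : Fin 3) : E3 → ℝ := fun y =>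
  3 / 2 * ((-(P a) * y b - P b * y a - kron a b * sl P y) * qf y + 5 * (y a * y b * sl P y))
  + 3 * (qf y * (y a * sl (ljc J b) y + y b * sl (ljc J a) y))
  + A * ((3 * y a * y b - kron a b * qf y) * qf y)
  + 3 / 2 * (((Q a * y b + Q b * y a - kron a b * sl Q y) * qf y + y a * y b * sl Q y) * qf y)

/-- Directional derivative of `sl w` in direction `c`. -/
def dsl (w : Fin 3 → ℝ) (c : Fin 3) : ℝ := w 0 * kron 0 c + w 1 * kron 1 c + w 2 * kron 2 c

/-- Directional derivative of `qf` in direction `c`. -/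
def dqf (x : E3) (c : Fin 3) : ℝ := 2 * x 0 * kron 0 c + 2 * x 1 * kron 1 c + 2 * x 2 * kron 2 c

/-- Hand-computed directional derivative of `pp` in direction `c`. -/
def ppd (P J Q : Fin 3 → ℝ) (A : ℝ) (a b c : Fin 3) (x : E3) : ℝ :=
  3/2 * ((-(P a) * kron b c - P b * kron a c - kron a b * dsl P c) * qf x
        + (-(P a) * x b - P b * x a - kron a b * sl P x) * dqf x c
        + 5 * (kron a c * x b * sl P x + x a * kron b c * sl P x + x a * x b * dsl P c))
  + 3 * (dqf x c * (x a * sl (ljc J b) x + x b * sl (ljc J a) x)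
        + qf x * (kron a c * sl (ljc J b) x + x a * dsl (ljc J b) c
                  + kron b c * sl (ljc J a) x + x b * dsl (ljc J a) c))
  + A * ((3 * kron a c * x b + 3 * x a * kron b c - kron a b * dqf x c) * qf x
        + (3 * x a * x b - kron a b * qf x) * dqf x c)
  + 3/2 * (((Q a * kron b c + Q b * kron a c - kron a b * dsl Q c) * qf x
           + (Q a * x b + Q b * x a - kron a b * sl Q x) * dqf x c
           + (kron a c * x b * sl Q x + x a * kron b c * sl Q x + x a * x b * dsl Q c)) * qf x
          + ((Q a * x b + Q b * x a - kron a b * sl Q x) * qf x + x a * x b * sl Q x) * dqf x c)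

lemma hproj (i : Fin 3) (x : E3) :
    HasFDerivAt (fun y : E3 => y i) (EuclideanSpace.proj (𝕜 := ℝ) i : E3 →L[ℝ] ℝ) x :=
  (EuclideanSpace.proj (𝕜 := ℝ) i : E3 →L[ℝ] ℝ).hasFDerivAt

lemma hsq (i : Fin 3) (x : E3) :
    HasFDerivAt (fun y : E3 => y i ^ 2)
      ((2 * x i) • (EuclideanSpace.proj (𝕜 := ℝ) i : E3 →L[ℝ] ℝ)) x := by
  have h := (hproj i x).mul (hproj i x)
  have e1 : ((fun y : E3 => y i) * fun y : E3 => y i) = fun y : E3 => y i ^ 2 := by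
    funext y; simp only [Pi.mul_apply]; ring
  rw [e1] at h
  refine h.congr_fderiv ?_
  ext v
  simp [two_mul, add_smul, mul_comm]

lemma hqf (x : E3) :
    HasFDerivAt qf
      ((2 * x 0) • (EuclideanSpace.proj (𝕜 := ℝ) 0 : E3 →L[ℝ] ℝ)
        + (2 * x 1) • (EuclideanSpace.proj (𝕜 := ℝ) 1 : E3 →L[ℝ] ℝ)
        + (2 * x 2) • (EuclideanSpace.proj (𝕜 := ℝ) 2 : E3 →L[ℝ] ℝ)) x :=
  ((hsq 0 x).add (hsq 1 x)).add (hsq 2 x)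

lemma hsl (w : Fin 3 → ℝ) (x : E3) :
    HasFDerivAt (sl w)
      (w 0 • (EuclideanSpace.proj (𝕜 := ℝ) 0 : E3 →L[ℝ] ℝ)
        + w 1 • (EuclideanSpace.proj (𝕜 := ℝ) 1 : E3 →L[ℝ] ℝ)
        + w 2 • (EuclideanSpace.proj (𝕜 := ℝ) 2 : E3 →L[ℝ] ℝ)) x :=
  (((hproj 0 x).const_mul (w 0)).add ((hproj 1 x).const_mul (w 1))).add
    ((hproj 2 x).const_mul (w 2))

lemma norm_eq_sqrt_qf (y : E3) : ‖y‖ = Real.sqrt (qf y) := by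
  rw [EuclideanSpace.norm_eq]
  simp [qf, Fin.sum_univ_three, sq_abs]

lemma qf_eq (y : E3) : qf y = ‖y‖ ^ 2 := by
  rw [norm_eq_sqrt_qf, Real.sq_sqrt]
  have : (0:ℝ) ≤ y 0 ^ 2 + y 1 ^ 2 + y 2 ^ 2 := by positivity
  simpa [qf] using this

set_option maxHeartbeats 1000000 in
lemma pp_deriv (P J Q : Fin 3 → ℝ) (A : ℝ) (a b : Fin 3) (x : E3) :
    ∃ L : E3 →L[ℝ] ℝ, HasFDerivAt (pp P J Q A a b) L x ∧
      ∀ c, L (EuclideanSpace.single c 1) = ppd P J Q A a b c x := by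
  have H :=
    (((((((((hproj b x).const_mul (-(P a))).sub ((hproj a x).const_mul (P b))).sub
            ((hsl P x).const_mul (kron a b))).mul (hqf x)).add
          ((((hproj a x).mul (hproj b x)).mul (hsl P x)).const_mul 5)).const_mul (3/2)).add
        (((hqf x).mul (((hproj a x).mul (hsl (ljc J b) x)).add
            ((hproj b x).mul (hsl (ljc J a) x)))).const_mul 3)).add
       ((((((hproj a x).const_mul 3).mul (hproj b x)).sub
            ((hqf x).const_mul (kron a b))).mul (hqf x)).const_mul A)).add
      ((((((((hproj b x).const_mul (Q a)).add ((hproj a x).const_mul (Q b))).sub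
            ((hsl Q x).const_mul (kron a b))).mul (hqf x)).add
           (((hproj a x).mul (hproj b x)).mul (hsl Q x))).mul (hqf x)).const_mul (3/2))
  refine ⟨_, H, ?_⟩
  intro c
  simp only [ContinuousLinearMap.add_apply, ContinuousLinearMap.sub_apply,
    ContinuousLinearMap.smul_apply, smul_eq_mul, PiLp.proj_apply,
    EuclideanSpace.single_apply, Pi.mul_apply, Pi.add_apply, Pi.sub_apply]
  simp only [ppd, dsl, dqf, kron, sl, qf]
  ring

set_option maxHeartbeats 1000000 in
lemma pd_div (x : E3) (hx : x ≠ 0) (a : Fin 3) (p : E3 → ℝ) (L : E3 →L[ℝ] ℝ)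
    (hp : HasFDerivAt p L x) :
    pd a (fun y => p y * ‖y‖ / qf y ^ 4) x
      = (L (EuclideanSpace.single a 1) * ‖x‖ ^ 2 - 7 * p x * x a) / ‖x‖ ^ 9 := by
  have hxn : ‖x‖ ≠ 0 := norm_ne_zero_iff.mpr hx
  have hq : qf x = ‖x‖ ^ 2 := qf_eq x
  have hq0 : qf x ≠ 0 := by rw [hq]; positivity
  have hnorm : HasFDerivAt (fun y : E3 => ‖y‖)
      ((1 / (2 * Real.sqrt (qf x))) •
        ((2 * x 0) • (EuclideanSpace.proj (𝕜 := ℝ) 0 : E3 →L[ℝ] ℝ)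
          + (2 * x 1) • (EuclideanSpace.proj (𝕜 := ℝ) 1 : E3 →L[ℝ] ℝ)
          + (2 * x 2) • (EuclideanSpace.proj (𝕜 := ℝ) 2 : E3 →L[ℝ] ℝ))) x := by
    have h := (Real.hasDerivAt_sqrt hq0).comp_hasFDerivAt x (hqf x)
    have e : ((fun t : ℝ => Real.sqrt t) ∘ qf : E3 → ℝ) = fun y : E3 => ‖y‖ := by
      funext y; simp [Function.comp]; rw [norm_eq_sqrt_qf]
    rwa [e] at h
  have hpow : HasDerivAt (fun t : ℝ => (t ^ 4)⁻¹)
      (-(4 * qf x ^ 3) / (qf x ^ 4) ^ 2) (qf x) := by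
    have h1 := hasDerivAt_pow 4 (qf x)
    have h2 := h1.inv (by positivity)
    refine h2.congr_deriv ?_
    norm_num
  have hinv : HasFDerivAt (fun y : E3 => (qf y ^ 4)⁻¹)
      ((-(4 * qf x ^ 3) / (qf x ^ 4) ^ 2) •
        ((2 * x 0) • (EuclideanSpace.proj (𝕜 := ℝ) 0 : E3 →L[ℝ] ℝ)
          + (2 * x 1) • (EuclideanSpace.proj (𝕜 := ℝ) 1 : E3 →L[ℝ] ℝ)
          + (2 * x 2) • (EuclideanSpace.proj (𝕜 := ℝ) 2 : E3 →L[ℝ] ℝ))) x :=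
    hpow.comp_hasFDerivAt x (hqf x)
  have hF := (hp.mul hnorm).mul hinv
  have e2 : ((p * fun y : E3 => ‖y‖) * fun y : E3 => (qf y ^ 4)⁻¹) = fun y => p y * ‖y‖ / qf y ^ 4 := by
    funext y; simp only [Pi.mul_apply]; rw [div_eq_mul_inv]
  rw [e2] at hF
  have hsum : 2 * x 0 * (if (0:Fin 3) = a then (1:ℝ) else 0)
      + 2 * x 1 * (if (1:Fin 3) = a then (1:ℝ) else 0)
      + 2 * x 2 * (if (2:Fin 3) = a then (1:ℝ) else 0) = 2 * x a := by
    fin_cases a <;> simp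
  rw [pd, hF.fderiv]
  simp only [ContinuousLinearMap.add_apply, ContinuousLinearMap.smul_apply, smul_eq_mul,
    PiLp.proj_apply, EuclideanSpace.single_apply, Pi.mul_apply]
  have hs : Real.sqrt (qf x) = ‖x‖ := (norm_eq_sqrt_qf x).symm
  rw [hsum, hs, hq]
  field_simp
  ring

set_option maxHeartbeats 1000000 in
lemma psiTot_eq (P J Q : Fin 3 → ℝ) (A : ℝ) (a b : Fin 3) (y : E3) :
    PsiTot P J Q A y a b = pp P J Q A a b y * ‖y‖ / qf y ^ 4 := by
  by_cases hy : y = 0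
  · subst hy
    simp [PsiTot, PsiP, PsiJ, PsiA, PsiQ, nv]
  · have hr : ‖y‖ ≠ 0 := norm_ne_zero_iff.mpr hy
    have hq : qf y = ‖y‖ ^ 2 := qf_eq y
    simp only [PsiTot, PsiP, PsiJ, PsiA, PsiQ, nv, pp, sl, ljc, Fin.sum_univ_three]
    rw [hq]
    field_simp
    ring


set_option maxHeartbeats 4000000 in
/-- `Ψ = Ψ_P + Ψ_J + Ψ_A + Ψ_Q` is symmetric, trace-free and
divergence-free with respect to the Euclidean metric on `ℝ³ \\ {0}`. -/
theorem stmt_16 (P J Q : Fin 3 → ℝ) (A : ℝ) :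
    (∀ x : E3, x ≠ 0 → ∀ a b, PsiTot P J Q A x a b = PsiTot P J Q A x b a) ∧
    (∀ x : E3, x ≠ 0 → ∑ a, PsiTot P J Q A x a a = 0) ∧
    (∀ x : E3, x ≠ 0 → ∀ b : Fin 3,
      ∑ a, pd a (fun y => PsiTot P J Q A y a b) x = 0) := by
  refine ⟨?_, ?_, ?_⟩
  · intro x _ a b
    have hk : kron a b = kron b a := by
      unfold kron
      by_cases h : a = b
      · subst h; rfl
      · rw [if_neg h, if_neg (Ne.symm h)]
    simp only [PsiTot, PsiP, PsiJ, PsiA, PsiQ]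
    rw [hk]; ring
  · intro x _
    rw [Fin.sum_univ_three, psiTot_eq, psiTot_eq, psiTot_eq]
    have h : pp P J Q A 0 0 x + pp P J Q A 1 1 x + pp P J Q A 2 2 x = 0 := by
      norm_num +decide [pp, sl, qf, ljc, kron, levi, Fin.sum_univ_three]
      ring
    rw [← add_div, ← add_div, ← add_mul, ← add_mul, h, zero_mul, zero_div]
  · intro x hx b
    have comp : ∀ a : Fin 3, pd a (fun y => PsiTot P J Q A y a b) x
        = (ppd P J Q A a b a x * ‖x‖ ^ 2 - 7 * pp P J Q A a b x * x a) / ‖x‖ ^ 9 := by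
      intro a
      obtain ⟨L, hL, hval⟩ := pp_deriv P J Q A a b x
      have he : (fun y => PsiTot P J Q A y a b) = fun y => pp P J Q A a b y * ‖y‖ / qf y ^ 4 :=
        funext fun y => psiTot_eq P J Q A a b y
      rw [he, pd_div x hx a _ L hL, hval a]
    rw [Fin.sum_univ_three, comp 0, comp 1, comp 2, ← add_div, ← add_div]
    have hq : qf x = ‖x‖ ^ 2 := qf_eq x
    rw [← hq]
    have key : ppd P J Q A 0 b 0 x * qf x - 7 * pp P J Q A 0 b x * x 0
        + (ppd P J Q A 1 b 1 x * qf x - 7 * pp P J Q A 1 b x * x 1)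
        + (ppd P J Q A 2 b 2 x * qf x - 7 * pp P J Q A 2 b x * x 2) = 0 := by
      fin_cases b <;>
      · simp only [show (⟨0, by norm_num⟩ : Fin 3) = 0 from rfl,
          show (⟨1, by norm_num⟩ : Fin 3) = 1 from rfl,
          show (⟨2, by norm_num⟩ : Fin 3) = 2 from rfl]
        norm_num +decide [pp, ppd, dsl, dqf, sl, qf, ljc, kron, levi, Fin.sum_univ_three]
        ring
    rw [key, zero_div]
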